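/- arXiv:1906.11342 — 2 statements merged into one kernel-verified Lean document; each statement's English description precedes it below -/
import Mathlib

section
/- Let n ≥ 3 and k ≥ 1, and let (x, c, u) be a combinatorial degenerated magic polygon D(n,k). For every offset r ∈ {1, …, k−1}, the sum S_r = ∑_{i=0}^{n−3} ∑_{t : Fin k} x t (i·k + r) of the labels at the r-th interior point of every edge not adjacent to the root, over all k polygons, equals (n−2)·k·(k²·(n−2)+k+2)/2. -/
open Fin.NatCast

/-- The labeling function of a combinatorial degenerated magic polygon `D(n,k)`:
the labels `x t p` of the points on the `k` polygons (root vertex excluded)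
together with the root label `c`. -/
def degMagicLabels (n k : ℕ) (x : Fin k → Fin (k * (n - 2) + 1) → ℕ) (c : ℕ) :
    (Fin k × Fin (k * (n - 2) + 1)) ⊕ Unit → ℕ :=
  Sum.elim (fun q => x q.1 q.2) (fun _ => c)

/-- `(x, c, u)` is a combinatorial degenerated magic polygon `D(n,k)`:
(1) the `k²(n−2)+k+1` labels are exactly `1, …, k²(n−2)+k+1`, each occurring once;
(2) every edge sum `∑_{j=0}^{k} x t (i·k + j)`, for an edge not adjacent to the
root (`0 ≤ i ≤ n−3`), equals `u`;
(3) for every position `p`, the sum `(∑ t, x t p) + c` along the segment joining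
the root vertex to the boundary of the largest polygon equals `u`. -/
def IsDegMagicPolygon (n k : ℕ) (x : Fin k → Fin (k * (n - 2) + 1) → ℕ) (c u : ℕ) : Prop :=
  Function.Injective (degMagicLabels n k x c) ∧
  Set.range (degMagicLabels n k x c) = Set.Icc 1 (k ^ 2 * (n - 2) + k + 1) ∧
  (∀ t : Fin k, ∀ i ∈ Finset.range (n - 2),
    ∑ j ∈ Finset.range (k + 1), x t ((i * k + j : ℕ)) = u) ∧
  (∀ p : Fin (k * (n - 2) + 1), (∑ t : Fin k, x t p) + c = u)

lemma sum_Icc_one_eq_sum_range (N : ℕ) :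
    ∑ m ∈ Finset.Icc 1 N, m = ∑ m ∈ Finset.range (N + 1), m := by
  induction N with
  | zero => simp
  | succ n ih => rw [Finset.sum_Icc_succ_top (by omega), ih, Finset.sum_range_succ,
      Finset.sum_range_succ, Finset.sum_range_succ]

theorem degMagicPolygon_offsetSum (n k : ℕ) (hn : 3 ≤ n) (hk : 1 ≤ k)
    (x : Fin k → Fin (k * (n - 2) + 1) → ℕ) (c u : ℕ)
    (h : IsDegMagicPolygon n k x c u) :
    ∀ r, 1 ≤ r → r ≤ k - 1 →
      ∑ i ∈ Finset.range (n - 2), ∑ t : Fin k, x t ((i * k + r : ℕ)) =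
        (n - 2) * k * (k ^ 2 * (n - 2) + k + 2) / 2 := by
  obtain ⟨hinj, hrange, hedge, hseg⟩ := h
  intro r hr1 hr2
  set N := k ^ 2 * (n - 2) + k + 1 with hN
  -- every column sums to u - c
  have hcol : ∀ p : Fin (k * (n - 2) + 1), ∑ t : Fin k, x t p = u - c := by
    intro p; have := hseg p; omega
  have hcu : c ≤ u := by
    have := hseg ⟨0, by positivity⟩; omega
  -- compare an edge sum with column sums to get k * c = u - c
  have h0 : (0 : ℕ) ∈ Finset.range (n - 2) := by
    simp only [Finset.mem_range]; omega
  have hku : k * u = (k + 1) * (u - c) := by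
    have h1 : ∑ t : Fin k, ∑ j ∈ Finset.range (k + 1), x t ((0 * k + j : ℕ)) = k * u := by
      rw [Finset.sum_congr rfl fun t _ => hedge t 0 h0]
      simp [Finset.sum_const, mul_comm]
    rw [Finset.sum_comm] at h1
    rw [Finset.sum_congr rfl fun j _ => hcol ((0 * k + j : ℕ) : Fin (k * (n - 2) + 1)),
      Finset.sum_const] at h1
    simpa [mul_comm] using h1.symm
  have hd : k * c = u - c := by
    have h3 : k * (u - c) + k * c = k * (u - c) + (u - c) := by
      have : k * ((u - c) + c) = (k + 1) * (u - c) := by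
        rw [Nat.sub_add_cancel hcu]; exact hku
      calc k * (u - c) + k * c = k * ((u - c) + c) := by ring
        _ = (k + 1) * (u - c) := this
        _ = k * (u - c) + (u - c) := by ring
    exact Nat.add_left_cancel h3
  -- total sum of all labels is the Gauss sum
  have htot : (∑ a : (Fin k × Fin (k * (n - 2) + 1)) ⊕ Unit, degMagicLabels n k x c a)
      = ∑ m ∈ Finset.Icc 1 N, m := by
    apply Finset.sum_bij (fun a _ => degMagicLabels n k x c a)
    · intro a _
      have : degMagicLabels n k x c a ∈ Set.Icc 1 N := hrange ▸ Set.mem_range_self a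
      simpa [Finset.mem_Icc, Set.mem_Icc] using this
    · intro a _ b _ hab; exact hinj hab
    · intro b hb
      have : b ∈ Set.range (degMagicLabels n k x c) := by
        rw [hrange]; simpa [Finset.mem_Icc, Set.mem_Icc] using hb
      obtain ⟨a, ha⟩ := this
      exact ⟨a, Finset.mem_univ a, ha⟩
    · intro a _; rfl
  -- compute the left side of htot
  have hlhs : (∑ a : (Fin k × Fin (k * (n - 2) + 1)) ⊕ Unit, degMagicLabels n k x c a)
      = (k * (n - 2) + 1) * (k * c) + c := by
    rw [Fintype.sum_sum_type]
    simp only [degMagicLabels, Sum.elim_inl, Sum.elim_inr]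
    rw [Fintype.sum_prod_type]
    have : ∀ t : Fin k, ∀ p : Fin (k * (n - 2) + 1), x t p = x t p := fun _ _ => rfl
    rw [Finset.sum_comm]
    rw [Finset.sum_congr rfl fun p _ => hcol p, Finset.sum_const]
    simp [← hd, Finset.card_univ, mul_comm]
  -- Gauss sum
  have hgauss : (∑ m ∈ Finset.Icc 1 N, m) * 2 = (N + 1) * N := by
    have := Finset.sum_range_id_mul_two (N + 1)
    have hIcc := sum_Icc_one_eq_sum_range N
    rw [hIcc, this]; simp
  -- derive 2 * c = N + 1
  have h2c : 2 * c = N + 1 := by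
    have hNe : (k * (n - 2) + 1) * k + 1 = N := by rw [hN]; ring
    have hcN : ((k * (n - 2) + 1) * (k * c) + c) = c * N := by
      calc (k * (n - 2) + 1) * (k * c) + c = c * ((k * (n - 2) + 1) * k + 1) := by ring
        _ = c * N := by rw [hNe]
    have hmain : c * N * 2 = (N + 1) * N := by
      rw [← hcN, ← hlhs, htot, hgauss]
    have hNpos : 0 < N := by rw [hN]; positivity
    have : N * (c * 2) = N * (N + 1) := by
      calc N * (c * 2) = c * N * 2 := by ring
        _ = (N + 1) * N := hmain
        _ = N * (N + 1) := by ring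
    have := Nat.eq_of_mul_eq_mul_left hNpos this
    omega
  -- conclude
  calc ∑ i ∈ Finset.range (n - 2), ∑ t : Fin k, x t ((i * k + r : ℕ))
      = ∑ i ∈ Finset.range (n - 2), (u - c) :=
        Finset.sum_congr rfl fun i _ => hcol _
    _ = (n - 2) * (u - c) := by rw [Finset.sum_const, smul_eq_mul, Finset.card_range]
    _ = (n - 2) * (k * c) := by rw [hd]
    _ = (n - 2) * k * (k ^ 2 * (n - 2) + k + 2) / 2 := by
        have hNe2 : k ^ 2 * (n - 2) + k + 2 = 2 * c := by omega
        rw [hNe2, show (n - 2) * k * (2 * c) = ((n - 2) * (k * c)) * 2 by ring,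
          Nat.mul_div_cancel _ two_pos]
end

section
/- Let n ≥ 3 and k ≥ 1, and let (x, c, u) be a combinatorial degenerated magic polygon D(n,k). Then the sum of the labels at all non-root vertices of all k polygons, S₁ = ∑_{i=0}^{n−2} ∑_{t : Fin k} x t (i·k), equals (n−1)·k·(k²·(n−2)+k+2)/2, i.e. S₁ = (n−1)·(u − c). -/
open Fin.NatCast

lemma degMagic_blocksum (f : ℕ → ℕ) (k : ℕ) (a : ℕ) :
    ∑ i ∈ Finset.range a, ∑ j ∈ Finset.range k, f (i * k + j)
      = ∑ m ∈ Finset.range (a * k), f m := by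
  induction a with
  | zero => simp
  | succ a ih =>
    rw [Finset.sum_range_succ, ih, Nat.succ_mul, Finset.sum_range_add]

theorem degMagicPolygon_vertexSum (n k : ℕ) (hn : 3 ≤ n) (hk : 1 ≤ k)
    (x : Fin k → Fin (k * (n - 2) + 1) → ℕ) (c u : ℕ)
    (h : IsDegMagicPolygon n k x c u) :
    ∑ i ∈ Finset.range (n - 1), ∑ t : Fin k, x t ((i * k : ℕ)) =
        (n - 1) * k * (k ^ 2 * (n - 2) + k + 2) / 2 ∧
    ∑ i ∈ Finset.range (n - 1), ∑ t : Fin k, x t ((i * k : ℕ)) = (n - 1) * (u - c) := by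
  obtain ⟨hinj, hrange, hedge, hseg⟩ := h
  have hcu : c ≤ u := by have := hseg 0; omega
  have hcol : ∀ p : Fin (k * (n - 2) + 1), ∑ t : Fin k, x t p = u - c := by
    intro p; have := hseg p; omega
  -- S₁ = (n-1) * (u - c)
  have hS1 : ∑ i ∈ Finset.range (n - 1), ∑ t : Fin k, x t ((i * k : ℕ))
      = (n - 1) * (u - c) := by
    rw [Finset.sum_congr rfl fun i _ => hcol _, Finset.sum_const, Finset.card_range,
      smul_eq_mul]
  refine ⟨?_, hS1⟩
  -- total of x-labels
  have hT : (∑ t : Fin k, ∑ p : Fin (k * (n - 2) + 1), x t p)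
      = (k * (n - 2) + 1) * (u - c) := by
    rw [Finset.sum_comm, Finset.sum_congr rfl fun p _ => hcol p, Finset.sum_const,
      Finset.card_univ, Fintype.card_fin, smul_eq_mul]
  -- grand total via the bijection onto Icc 1 N
  have himg : Finset.image (degMagicLabels n k x c) Finset.univ
      = Finset.Icc 1 (k ^ 2 * (n - 2) + k + 1) := by
    ext m
    have hm : m ∈ Set.range (degMagicLabels n k x c)
        ↔ m ∈ Set.Icc 1 (k ^ 2 * (n - 2) + k + 1) := by rw [hrange]
    simpa [Finset.mem_image, Set.mem_range, Set.mem_Icc, eq_comm] using hm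
  have hsum_univ : (∑ q : (Fin k × Fin (k * (n - 2) + 1)) ⊕ Unit, degMagicLabels n k x c q)
      = ∑ m ∈ Finset.Icc 1 (k ^ 2 * (n - 2) + k + 1), m := by
    rw [← himg, Finset.sum_image (fun a _ b _ hab => hinj hab)]
  have hdom : (∑ q : (Fin k × Fin (k * (n - 2) + 1)) ⊕ Unit, degMagicLabels n k x c q)
      = (∑ t : Fin k, ∑ p : Fin (k * (n - 2) + 1), x t p) + c := by
    simp [degMagicLabels, Fintype.sum_sum_type, Fintype.sum_prod_type]
  have hIcc : ∀ N : ℕ, (∑ m ∈ Finset.Icc 1 N, m) * 2 = N * (N + 1) := by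
    intro N
    have hins : Finset.range (N + 1) = insert 0 (Finset.Icc 1 N) := by
      ext m; simp [Nat.lt_succ_iff]; omega
    have h0 : (0 : ℕ) ∉ Finset.Icc 1 N := by simp
    have := Finset.sum_range_id_mul_two (N + 1)
    rw [hins, Finset.sum_insert h0, zero_add] at this
    simpa [Nat.mul_comm] using this
  have htot : ((∑ t : Fin k, ∑ p : Fin (k * (n - 2) + 1), x t p) + c) * 2
      = (k ^ 2 * (n - 2) + k + 1) * (k ^ 2 * (n - 2) + k + 2) := by
    rw [← hdom, hsum_univ, hIcc]
  -- edge double counting, per polygon t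
  have key_t : ∀ t : Fin k,
      (n - 2) * u + x t (((n - 2) * k : ℕ)) + x t ((0 : ℕ))
        = (∑ p : Fin (k * (n - 2) + 1), x t p)
          + ∑ i ∈ Finset.range (n - 1), x t ((i * k : ℕ)) := by
    intro t
    have e1 : ∑ i ∈ Finset.range (n - 2), ∑ j ∈ Finset.range (k + 1),
        x t ((i * k + j : ℕ)) = (n - 2) * u := by
      rw [Finset.sum_congr rfl (fun i hi => hedge t i hi), Finset.sum_const,
        Finset.card_range, smul_eq_mul]
    have e2 : ∑ i ∈ Finset.range (n - 2), ∑ j ∈ Finset.range (k + 1),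
        x t ((i * k + j : ℕ))
        = (∑ m ∈ Finset.range ((n - 2) * k), x t ((m : ℕ)))
          + ∑ i ∈ Finset.range (n - 2), x t ((i * k + k : ℕ)) := by
      rw [← degMagic_blocksum (fun m => x t ((m : ℕ))) k (n - 2), ← Finset.sum_add_distrib]
      exact Finset.sum_congr rfl fun i _ => Finset.sum_range_succ _ k
    have e3 : (∑ p : Fin (k * (n - 2) + 1), x t p)
        = ∑ m ∈ Finset.range (k * (n - 2) + 1), x t ((m : ℕ)) := by
      rw [← Fin.sum_univ_eq_sum_range (fun m => x t ((m : ℕ)))]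
      exact Finset.sum_congr rfl fun p _ => by rw [Fin.cast_val_eq_self]
    have e4 : ∑ m ∈ Finset.range (k * (n - 2) + 1), x t ((m : ℕ))
        = (∑ m ∈ Finset.range ((n - 2) * k), x t ((m : ℕ)))
          + x t (((n - 2) * k : ℕ)) := by
      rw [show Finset.range (k * (n - 2) + 1) = Finset.range ((n - 2) * k + 1) by
        rw [Nat.mul_comm], Finset.sum_range_succ]
    have e5 : ∑ i ∈ Finset.range (n - 1), x t ((i * k : ℕ))
        = (∑ i ∈ Finset.range (n - 2), x t ((i * k + k : ℕ))) + x t ((0 : ℕ)) := by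
      rw [show n - 1 = (n - 2) + 1 by omega, Finset.sum_range_succ']
      congr 1
      · exact Finset.sum_congr rfl fun i _ => by rw [add_mul, one_mul]
      · rw [Nat.zero_mul]
    calc (n - 2) * u + x t (((n - 2) * k : ℕ)) + x t ((0 : ℕ))
        = ((∑ m ∈ Finset.range ((n - 2) * k), x t ((m : ℕ)))
            + ∑ i ∈ Finset.range (n - 2), x t ((i * k + k : ℕ)))
          + x t (((n - 2) * k : ℕ)) + x t ((0 : ℕ)) := by rw [← e2, e1]
      _ = ((∑ m ∈ Finset.range ((n - 2) * k), x t ((m : ℕ))) + x t (((n - 2) * k : ℕ)))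
          + ((∑ i ∈ Finset.range (n - 2), x t ((i * k + k : ℕ))) + x t ((0 : ℕ))) := by ring
      _ = _ := by rw [← e4, ← e5, ← e3]
  -- sum the per-polygon identity over t
  have key : k * ((n - 2) * u) + (u - c) + (u - c)
      = (k * (n - 2) + 1) * (u - c) + (n - 1) * (u - c) := by
    have hsum := Finset.sum_congr rfl (fun t (_ : t ∈ Finset.univ) => key_t t)
    rw [Finset.sum_add_distrib, Finset.sum_add_distrib, Finset.sum_const,
      Finset.card_univ, Fintype.card_fin, smul_eq_mul,
      hcol ((((n - 2) * k : ℕ) : Fin (k * (n - 2) + 1))),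
      hcol (((0 : ℕ) : Fin (k * (n - 2) + 1))),
      Finset.sum_add_distrib, hT, Finset.sum_comm, hS1] at hsum
    exact hsum
  -- deduce u - c = k * c
  have hDc : u - c = k * c := by
    obtain ⟨a, ha⟩ : ∃ a, n - 2 = a + 1 := ⟨n - 3, by omega⟩
    set D := u - c with hDdef
    rw [ha, show n - 1 = a + 2 by omega, show u = D + c by omega] at key
    have keyz : (k : ℤ) * ((a + 1) * ((D : ℕ) + c)) + (D : ℕ) + (D : ℕ)
        = (k * (a + 1) + 1) * (D : ℕ) + (a + 2) * (D : ℕ) := by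
      exact_mod_cast key
    have h1 : ((a : ℤ) + 1) * (k * c) = (a + 1) * (D : ℕ) := by linear_combination keyz
    have h2 : ((D : ℕ) : ℤ) = k * c := by
      have ha1 : ((a : ℤ) + 1) ≠ 0 := by positivity
      exact (mul_left_cancel₀ ha1 h1).symm
    exact_mod_cast h2
  -- deduce 2 * c = N + 1
  have hc2 : 2 * c = k ^ 2 * (n - 2) + k + 2 := by
    have hNpos : 0 < k ^ 2 * (n - 2) + k + 1 := by positivity
    have hN : (k ^ 2 * (n - 2) + k + 1) * (2 * c)
        = (k ^ 2 * (n - 2) + k + 1) * (k ^ 2 * (n - 2) + k + 2) := by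
      rw [← htot, hT, hDc]; ring
    exact Nat.eq_of_mul_eq_mul_left hNpos hN
  -- finish
  rw [hS1, hDc, ← hc2,
    show (n - 1) * k * (2 * c) = ((n - 1) * (k * c)) * 2 by ring,
    Nat.mul_div_cancel _ (by norm_num)]
end
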